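/- The tree coefficients a_T defined recursively by a_T = (1/n_T) Σ_{v ∈ V_T} (−1)^{n_v^+} ∏_{s=1}^{n_v} a_{T_s(v)}, with a_• = 1 for the one-vertex tree, vanish for every oriented unrooted labelled tree T with an even number of vertices. -/

import Mathlib

open scoped Classical

/-- An (oriented, labelled) graph on a finite set of natural-number vertices,
given by its vertex set and an oriented edge relation. -/
structure DiGraph where
  verts : Finset ℕ
  E : ℕ → ℕ → Prop

namespace DiGraph

/-- The underlying (unoriented) simple graph on the vertex set. -/
def symGraph (G : DiGraph) : SimpleGraph {x : ℕ // x ∈ G.verts} where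
  Adj a b := (G.E a.1 b.1 ∨ G.E b.1 a.1) ∧ a ≠ b
  symm := ⟨fun a b h => ⟨h.1.symm, h.2.symm⟩⟩
  loopless := ⟨fun a h => h.2 rfl⟩

/-- `G` is an oriented unrooted labelled tree: its edges join vertices of `G`,
no edge occurs in both orientations, and the underlying simple graph is a tree. -/
def IsOTree (G : DiGraph) : Prop :=
  (∀ i j, G.E i j → i ∈ G.verts ∧ j ∈ G.verts) ∧
  (∀ i j, G.E i j → ¬ G.E j i) ∧
  G.symGraph.IsTree

/-- The number `n_v⁺` of edges oriented into the vertex `v`. -/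
noncomputable def inDeg (G : DiGraph) (v : ℕ) : ℕ :=
  (G.verts.filter fun w => G.E w v).card

/-- The graph obtained by deleting the vertex `v`. -/
def delV (G : DiGraph) (v : ℕ) : DiGraph :=
  ⟨G.verts.erase v, fun i j => G.E i j ∧ i ≠ v ∧ j ≠ v⟩

/-- The subgraph induced on a set `s` of vertices. -/
def induce (G : DiGraph) (s : Finset ℕ) : DiGraph :=
  ⟨s, fun i j => G.E i j ∧ i ∈ s ∧ j ∈ s⟩

/-- The vertex set of a connected component of (the underlying graph of) `G`. -/
noncomputable def compVerts (G : DiGraph) (c : G.symGraph.ConnectedComponent) : Finset ℕ :=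
  G.verts.filter fun x => ∃ h : x ∈ G.verts, G.symGraph.connectedComponentMk ⟨x, h⟩ = c

/-- The subgraph of `G` given by a connected component. -/
noncomputable def component (G : DiGraph) (c : G.symGraph.ConnectedComponent) : DiGraph :=
  G.induce (G.compVerts c)

/-- `a : DiGraph → ℚ` satisfies the defining recursion of the tree coefficients `a_T`:
`a_• = 1` for the one-vertex tree, and for a tree `T` with at least two vertices
`a_T = (1/n_T) Σ_{v ∈ V_T} (−1)^{n_v⁺} ∏_s a_{T_s(v)}`,
the product running over the connected components of `T` with the vertex `v` deleted. -/
def ARec (a : DiGraph → ℚ) : Prop :=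
  (∀ G : DiGraph, G.IsOTree → G.verts.card = 1 → a G = 1) ∧
  (∀ G : DiGraph, G.IsOTree → 2 ≤ G.verts.card →
    a G = (1 / (G.verts.card : ℚ)) * ∑ v ∈ G.verts, (-1 : ℚ) ^ (G.inDeg v) *
      ∏ᶠ c : (G.delV v).symGraph.ConnectedComponent, a ((G.delV v).component c))

end DiGraph


namespace ATaux
open List DiGraph SimpleGraph

/-- `x` occurs (strictly) before `y` in `l`. -/
def bef (l : List ℕ) (x y : ℕ) : Prop := [x, y] <+ l

lemma bef_total {l : List ℕ} {x y : ℕ} (hx : x ∈ l) (hy : y ∈ l) (hxy : x ≠ y) :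
    bef l x y ∨ bef l y x := by
  induction l with
  | nil => simp at hx
  | cons a t ih =>
    rcases eq_or_ne x a with rfl | hxa
    · have hy' : y ∈ t := by
        rcases List.mem_cons.mp hy with rfl | h
        · exact absurd rfl hxy
        · exact h
      exact Or.inl (List.cons_sublist_cons.mpr (List.singleton_sublist.mpr hy'))
    · rcases eq_or_ne y a with rfl | hya
      · have hx' : x ∈ t := by
          rcases List.mem_cons.mp hx with rfl | h
          · exact absurd rfl hxa
          · exact h
        exact Or.inr (List.cons_sublist_cons.mpr (List.singleton_sublist.mpr hx'))
      · have hx' : x ∈ t := by rcases List.mem_cons.mp hx with rfl | h; exact absurd rfl hxa; exact h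
        have hy' : y ∈ t := by rcases List.mem_cons.mp hy with rfl | h; exact absurd rfl hya; exact h
        rcases ih hx' hy' with h | h
        · exact Or.inl (h.cons a)
        · exact Or.inr (h.cons a)

lemma bef_asymm {l : List ℕ} (hl : l.Nodup) {x y : ℕ} (h1 : bef l x y) (h2 : bef l y x) :
    False := by
  induction l with
  | nil => simp [bef] at h1
  | cons a t ih =>
    have hnd := List.nodup_cons.mp hl
    rcases List.sublist_cons_iff.mp h1 with h1' | ⟨r, hr, hrs⟩
    · rcases List.sublist_cons_iff.mp h2 with h2' | ⟨r2, hr2, hrs2⟩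
      · exact ih hnd.2 h1' h2'
      · -- y = a; but y ∈ t from h1'
        have hya : y = a := by simpa using ((congrArg (fun l => l.headI) hr2).symm).symm
        exact hnd.1 (hya ▸ h1'.subset (by simp))
    · -- x = a, r = [y], hrs : [y] <+ t
      have hxa : x = a := by simpa using congrArg (fun l => l.headI) hr
      have hry : r = [y] := by simpa [hxa] using hr.symm
      have hyt : y ∈ t := List.singleton_sublist.mp (hry ▸ hrs)
      rcases List.sublist_cons_iff.mp h2 with h2' | ⟨r2, hr2, hrs2⟩
      · exact hnd.1 (hxa ▸ h2'.subset (by simp))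
      · have hya : y = a := by simpa using ((congrArg (fun l => l.headI) hr2).symm).symm
        exact hnd.1 (hya ▸ hyt)

lemma bef_of_bef_filter {l : List ℕ} (p : ℕ → Bool) {x y : ℕ}
    (h : bef (l.filter p) x y) : bef l x y := h.trans List.filter_sublist

lemma bef_filter_iff {l : List ℕ} (hl : l.Nodup) (p : ℕ → Bool) {x y : ℕ}
    (hx : x ∈ l.filter p) (hy : y ∈ l.filter p) (hxy : x ≠ y) :
    bef (l.filter p) x y ↔ bef l x y := by
  constructor
  · exact bef_of_bef_filter p
  · intro h
    rcases bef_total hx hy hxy with h' | h'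
    · exact h'
    · exact absurd (bef_of_bef_filter p h') (fun h'' => bef_asymm hl h h'')

lemma bef_cons_self {l : List ℕ} {v y : ℕ} (hy : y ∈ l) : bef (v :: l) v y :=
  List.cons_sublist_cons.mpr (List.singleton_sublist.mpr hy)

lemma not_bef_cons_right {l : List ℕ} {v x : ℕ} (hv : v ∉ l) (hx : x ≠ v) :
    ¬ bef (v :: l) x v := by
  intro h
  rcases List.sublist_cons_iff.mp h with h' | ⟨r, hr, hrs⟩
  · exact hv (h'.subset (by simp))
  · exact hx (by simpa using congrArg (fun l => l.headI) hr)

lemma bef_cons_of_ne {l : List ℕ} {v x y : ℕ} (hx : x ≠ v) :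
    bef (v :: l) x y ↔ bef l x y := by
  constructor
  · intro h
    rcases List.sublist_cons_iff.mp h with h' | ⟨r, hr, _⟩
    · exact h'
    · exact absurd (by simpa using congrArg (fun l => l.headI) hr) hx
  · exact fun h => h.cons v

lemma bef_reverse_iff {l : List ℕ} {x y : ℕ} : bef l.reverse x y ↔ bef l y x := by
  constructor
  · intro h
    have := h.reverse
    simpa [bef] using this
  · intro h
    have := h.reverse
    simpa [bef] using this


noncomputable def permsF (S : Finset ℕ) : Finset (List ℕ) :=
  (S.sort (· ≤ ·)).permutations.toFinset

lemma mem_permsF {S : Finset ℕ} {l : List ℕ} :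
    l ∈ permsF S ↔ l.Nodup ∧ l.toFinset = S := by
  rw [permsF, List.mem_toFinset, List.mem_permutations]
  constructor
  · intro h
    refine ⟨h.nodup_iff.mpr (Finset.sort_nodup S _), ?_⟩
    have hc : (l : Multiset ℕ) = ((S.sort (· ≤ ·) : List ℕ) : Multiset ℕ) :=
      Multiset.coe_eq_coe.mpr h
    rw [← List.toFinset_coe, hc, List.toFinset_coe, Finset.sort_toFinset]
  · rintro ⟨h1, h2⟩
    have e1 : (l : Multiset ℕ) = S.val := by
      have : ((l : Multiset ℕ)).dedup = S.val := by
        have := congrArg Finset.val h2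
        rwa [List.toFinset, Multiset.toFinset] at this
      rwa [Multiset.dedup_eq_self.mpr (by exact_mod_cast h1)] at this
    have e2 : ((S.sort (· ≤ ·) : List ℕ) : Multiset ℕ) = S.val := Finset.sort_eq S _
    exact Multiset.coe_eq_coe.mp (e1.trans e2.symm)

lemma permsF_empty : permsF ∅ = {[]} := by
  ext l
  simp [mem_permsF, List.toFinset_eq_empty_iff]
  rintro rfl; exact List.nodup_nil

lemma sum_permsF_cons (F : List ℕ → ℚ) {S : Finset ℕ} (hS : S.Nonempty) :
    ∑ l ∈ permsF S, F l = ∑ v ∈ S, ∑ l' ∈ permsF (S.erase v), F (v :: l') := by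
  rw [Finset.sum_sigma' S (fun v => permsF (S.erase v)) (fun v l' => F (v :: l'))]
  refine (Finset.sum_nbij' (i := fun (x : Σ _ : ℕ, List ℕ) => x.1 :: x.2)
    (j := fun (l : List ℕ) => (⟨l.head!, l.tail⟩ : Σ _ : ℕ, List ℕ)) ?_ ?_ ?_ ?_ ?_).symm
  · rintro ⟨v, l'⟩ hx
    rw [Finset.mem_sigma] at hx
    obtain ⟨hv, hl'⟩ := hx
    obtain ⟨hnd, htf⟩ := mem_permsF.mp hl'
    have hvl' : v ∉ l' := fun h => by
      have : v ∈ S.erase v := htf ▸ List.mem_toFinset.mpr h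
      simp at this
    refine mem_permsF.mpr ⟨List.nodup_cons.mpr ⟨hvl', hnd⟩, ?_⟩
    simp [htf, Finset.insert_erase hv]
  · intro l hl
    obtain ⟨hnd, htf⟩ := mem_permsF.mp hl
    have hne : l ≠ [] := by
      rintro rfl
      simp at htf
      exact hS.ne_empty htf.symm
    have hcons := List.cons_head!_tail hne (α := ℕ)
    rw [Finset.mem_sigma]
    have hh : l.head! ∈ S := by
      rw [← htf]
      exact List.mem_toFinset.mpr (by rw [← hcons]; exact List.mem_cons_self)
    refine ⟨hh, mem_permsF.mpr ⟨?_, ?_⟩⟩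
    · exact (List.nodup_cons.mp (hcons ▸ hnd)).2
    · have h2 := hcons ▸ hnd
      have h3 : l.head! ∉ l.tail := (List.nodup_cons.mp h2).1
      have : l.toFinset = insert l.head! l.tail.toFinset := by
        conv_lhs => rw [← hcons]
        simp
      rw [← htf, this, Finset.erase_insert (by simpa using h3)]
  · rintro ⟨v, l'⟩ hx
    simp
  · intro l hl
    obtain ⟨hnd, htf⟩ := mem_permsF.mp hl
    have hne : l ≠ [] := by
      rintro rfl
      simp at htf
      exact hS.ne_empty htf.symm
    simpa using List.cons_head!_tail hne
  · rintro ⟨v, l'⟩ hx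
    rfl


lemma shuffle2 (n : ℕ) : ∀ (S : Finset ℕ), S.card = n → ∀ (p : ℕ → Bool) (g h : List ℕ → ℚ),
    (∑ l ∈ permsF S, g (l.filter p) * h (l.filter fun x => !(p x)))
      * (((S.filter fun x => p x).card.factorial : ℚ)
          * ((S.filter fun x => !(p x)).card.factorial : ℚ))
    = (S.card.factorial : ℚ) *
      ((∑ m ∈ permsF (S.filter fun x => p x), g m)
        * (∑ m ∈ permsF (S.filter fun x => !(p x)), h m)) := by
  induction n with
  | zero =>
    intro S hS p g h
    rw [Finset.card_eq_zero] at hS; subst hS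
    simp [permsF_empty]
  | succ n ih =>
    intro S hS p g h
    have hSne : S.Nonempty := by rw [← Finset.card_pos, hS]; omega
    set Sp := S.filter (fun x => p x) with hSp
    set Sq := S.filter (fun x => !(p x)) with hSq
    set P := Sp.card with hP
    set Q := Sq.card with hQ
    set G := (∑ m ∈ permsF Sp, g m) with hG
    set H := (∑ m ∈ permsF Sq, h m) with hH
    have hPQ : P + Q = n + 1 := by
      rw [hP, hQ, hSp, hSq, ← hS]
      have := Finset.card_filter_add_card_filter_not (s := S) (fun x => p x = true)
      simpa using this
    set T : ℕ → ℚ := fun v => ∑ l' ∈ permsF (S.erase v),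
      g ((v :: l').filter p) * h ((v :: l').filter fun x => !(p x)) with hT
    have hsplit : (∑ l ∈ permsF S, g (l.filter p) * h (l.filter fun x => !(p x)))
        = (∑ v ∈ Sp, T v) + (∑ v ∈ Sq, T v) := by
      rw [sum_permsF_cons _ hSne]
      rw [← Finset.sum_filter_add_sum_filter_not S (fun x => p x = true) T]
      congr 1
      apply Finset.sum_congr _ (fun _ _ => rfl)
      rw [hSq]; apply Finset.filter_congr; intro x _; simp
    -- claim A
    have claimA : (∑ v ∈ Sp, T v) * ((P.factorial : ℚ) * Q.factorial)
        = (P : ℚ) * n.factorial * (G * H) := by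
      rcases Finset.eq_empty_or_nonempty Sp with he | hne
      · rw [he] at hP ⊢
        simp [hP]
      · have key : ∀ v ∈ Sp, T v * ((P.factorial : ℚ) * Q.factorial)
            = ((P : ℚ) * n.factorial * H) * (∑ m ∈ permsF (Sp.erase v), g (v :: m)) := by
          intro v hv
          have hvS : v ∈ S := (Finset.mem_filter.mp hv).1
          have hpv : p v = true := by simpa using (Finset.mem_filter.mp hv).2
          have hcard : (S.erase v).card = n := by
            have := Finset.card_erase_add_one hvS; omega
          have hfp : (S.erase v).filter (fun x => p x) = Sp.erase v := by
            rw [hSp, Finset.filter_erase]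
          have hfq : (S.erase v).filter (fun x => !(p x)) = Sq := by
            rw [Finset.filter_erase, ← hSq]
            apply Finset.erase_eq_of_notMem
            rw [hSq]; simp [hpv]
          have hTv : T v = ∑ l' ∈ permsF (S.erase v),
              g (v :: l'.filter p) * h (l'.filter fun x => !(p x)) := by
            rw [hT]
            apply Finset.sum_congr rfl
            intro l' _
            rw [List.filter_cons_of_pos hpv, List.filter_cons_of_neg (by simp [hpv])]
          have hih := ih (S.erase v) hcard p (fun m => g (v :: m)) h
          rw [hfp, hfq, hcard] at hih
          have hPv : (Sp.erase v).card + 1 = P := Finset.card_erase_add_one hv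
          have hfac : (P.factorial : ℚ) = (P : ℚ) * (Sp.erase v).card.factorial := by
            rw [← hPv, Nat.factorial_succ]; push_cast; ring
          calc T v * ((P.factorial : ℚ) * Q.factorial)
              = (P : ℚ) * ((∑ l' ∈ permsF (S.erase v), g (v :: l'.filter p)
                  * h (l'.filter fun x => !(p x)))
                * (((Sp.erase v).card.factorial : ℚ) * Q.factorial)) := by
                rw [hTv, hfac]; ring
            _ = (P : ℚ) * (n.factorial * ((∑ m ∈ permsF (Sp.erase v), g (v :: m)) * H)) := by
                rw [hih]
            _ = ((P : ℚ) * n.factorial * H) * (∑ m ∈ permsF (Sp.erase v), g (v :: m)) := by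
                ring
        rw [Finset.sum_mul, Finset.sum_congr rfl key, ← Finset.mul_sum,
          ← sum_permsF_cons g hne]
        ring
    -- claim B
    have claimB : (∑ v ∈ Sq, T v) * ((P.factorial : ℚ) * Q.factorial)
        = (Q : ℚ) * n.factorial * (G * H) := by
      rcases Finset.eq_empty_or_nonempty Sq with he | hne
      · rw [he] at hQ ⊢
        simp [hQ]
      · have key : ∀ v ∈ Sq, T v * ((P.factorial : ℚ) * Q.factorial)
            = ((Q : ℚ) * n.factorial * G) * (∑ m ∈ permsF (Sq.erase v), h (v :: m)) := by
          intro v hv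
          have hvS : v ∈ S := (Finset.mem_filter.mp hv).1
          have hpv : p v = false := by
            have := (Finset.mem_filter.mp hv).2; simpa using this
          have hcard : (S.erase v).card = n := by
            have := Finset.card_erase_add_one hvS; omega
          have hfq : (S.erase v).filter (fun x => !(p x)) = Sq.erase v := by
            rw [hSq, Finset.filter_erase]
          have hfp : (S.erase v).filter (fun x => p x) = Sp := by
            rw [Finset.filter_erase, ← hSp]
            apply Finset.erase_eq_of_notMem
            rw [hSp]; simp [hpv]
          have hTv : T v = ∑ l' ∈ permsF (S.erase v),
              g (l'.filter p) * h (v :: l'.filter fun x => !(p x)) := by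
            rw [hT]
            apply Finset.sum_congr rfl
            intro l' _
            rw [List.filter_cons_of_neg (by simp [hpv]), List.filter_cons_of_pos (by simp [hpv])]
          have hih := ih (S.erase v) hcard p g (fun m => h (v :: m))
          rw [hfp, hfq, hcard] at hih
          have hQv : (Sq.erase v).card + 1 = Q := Finset.card_erase_add_one hv
          have hfac : (Q.factorial : ℚ) = (Q : ℚ) * (Sq.erase v).card.factorial := by
            rw [← hQv, Nat.factorial_succ]; push_cast; ring
          calc T v * ((P.factorial : ℚ) * Q.factorial)
              = (Q : ℚ) * ((∑ l' ∈ permsF (S.erase v), g (l'.filter p)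
                  * h (v :: l'.filter fun x => !(p x)))
                * (((P.factorial : ℚ)) * (Sq.erase v).card.factorial)) := by
                rw [hTv, hfac]; ring
            _ = (Q : ℚ) * (n.factorial * (G * (∑ m ∈ permsF (Sq.erase v), h (v :: m)))) := by
                rw [hih]
            _ = ((Q : ℚ) * n.factorial * G) * (∑ m ∈ permsF (Sq.erase v), h (v :: m)) := by
                ring
        rw [Finset.sum_mul, Finset.sum_congr rfl key, ← Finset.mul_sum,
          ← sum_permsF_cons h hne]
        ring
    rw [hsplit, add_mul, claimA, claimB, hS]
    have hc : (P : ℚ) + Q = (n : ℚ) + 1 := by exact_mod_cast hPQ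
    have hfac : (((n+1).factorial : ℕ) : ℚ) = ((n : ℚ) + 1) * n.factorial := by
      rw [Nat.factorial_succ]; push_cast; ring
    rw [hfac, ← hc]
    ring


lemma shuffleM {ι : Type} (I : Finset ι) (B : ι → Finset ℕ) (g : ι → List ℕ → ℚ)
    (hdisj : ∀ i ∈ I, ∀ j ∈ I, i ≠ j → ∀ x, x ∈ B i → x ∉ B j) :
    (∑ l ∈ permsF (I.biUnion B), ∏ i ∈ I, g i (l.filter fun x => decide (x ∈ B i)))
      * ∏ i ∈ I, ((B i).card.factorial : ℚ)
    = (((I.biUnion B).card.factorial : ℕ) : ℚ) * ∏ i ∈ I, (∑ m ∈ permsF (B i), g i m) := by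
  classical
  induction I using Finset.induction with
  | empty => simp [permsF_empty]
  | @insert i0 I' hi0 ih =>
    have hdisj' : ∀ i ∈ I', ∀ j ∈ I', i ≠ j → ∀ x, x ∈ B i → x ∉ B j := by
      intro i hi j hj hij
      exact hdisj i (Finset.mem_insert_of_mem hi) j (Finset.mem_insert_of_mem hj) hij
    have ihU := ih hdisj'
    set S := (insert i0 I').biUnion B with hSdef
    set U := I'.biUnion B with hUdef
    have hSU : S = B i0 ∪ U := Finset.biUnion_insert
    set p : ℕ → Bool := fun x => decide (x ∈ B i0) with hp
    have hfp : S.filter (fun x => p x) = B i0 := by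
      ext x
      simp only [Finset.mem_filter, hp, decide_eq_true_eq]
      constructor
      · exact fun h => h.2
      · intro h
        exact ⟨by rw [hSU]; exact Finset.mem_union_left _ h, h⟩
    have hfq : S.filter (fun x => !(p x)) = U := by
      ext x
      simp only [Finset.mem_filter, hp, Bool.not_eq_true', decide_eq_false_iff_not]
      constructor
      · intro ⟨h1, h2⟩
        rw [hSU] at h1
        rcases Finset.mem_union.mp h1 with h | h
        · exact absurd h h2
        · exact h
      · intro h
        obtain ⟨j, hj, hxj⟩ := Finset.mem_biUnion.mp h
        refine ⟨by rw [hSU]; exact Finset.mem_union_right _ h, ?_⟩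
        exact fun hx0 => hdisj j (Finset.mem_insert_of_mem hj) i0 (Finset.mem_insert_self _ _)
          (fun he => hi0 (he ▸ hj)) x hxj hx0
    set hfun : List ℕ → ℚ := fun m => ∏ i ∈ I', g i (m.filter fun x => decide (x ∈ B i))
      with hhfun
    have hfilterfilter : ∀ l : List ℕ,
        hfun (l.filter fun x => !(p x)) = ∏ i ∈ I', g i (l.filter fun x => decide (x ∈ B i)) := by
      intro l
      rw [hhfun]
      apply Finset.prod_congr rfl
      intro i hi
      congr 1
      rw [List.filter_filter]
      apply List.filter_congr
      intro x _
      by_cases hx : x ∈ B i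
      · have : x ∉ B i0 := hdisj i (Finset.mem_insert_of_mem hi) i0 (Finset.mem_insert_self _ _)
          (fun he => hi0 (he ▸ hi)) x hx
        simp [hx, hp, this]
      · simp [hx]
    have hsum : (∑ l ∈ permsF S, ∏ i ∈ insert i0 I', g i (l.filter fun x => decide (x ∈ B i)))
        = ∑ l ∈ permsF S, g i0 (l.filter p) * hfun (l.filter fun x => !(p x)) := by
      apply Finset.sum_congr rfl
      intro l _
      rw [Finset.prod_insert hi0, hfilterfilter l, hp]
    have hsh := shuffle2 S.card S rfl p (g i0) hfun
    rw [hfp, hfq] at hsh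
    have hUne : ((U.card.factorial : ℕ) : ℚ) ≠ 0 := by
      exact_mod_cast Nat.factorial_ne_zero U.card
    apply mul_right_cancel₀ hUne
    rw [Finset.prod_insert hi0, Finset.prod_insert hi0, hsum]
    calc (∑ l ∈ permsF S, g i0 (l.filter p) * hfun (l.filter fun x => !(p x)))
          * (((B i0).card.factorial : ℚ) * ∏ i ∈ I', ((B i).card.factorial : ℚ))
          * (U.card.factorial : ℚ)
        = ((∑ l ∈ permsF S, g i0 (l.filter p) * hfun (l.filter fun x => !(p x)))
            * (((B i0).card.factorial : ℚ) * (U.card.factorial : ℚ)))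
          * ∏ i ∈ I', ((B i).card.factorial : ℚ) := by ring
      _ = ((S.card.factorial : ℚ) * ((∑ m ∈ permsF (B i0), g i0 m)
            * (∑ m ∈ permsF U, hfun m))) * ∏ i ∈ I', ((B i).card.factorial : ℚ) := by
          rw [hsh]
      _ = (S.card.factorial : ℚ) * (∑ m ∈ permsF (B i0), g i0 m)
            * ((∑ m ∈ permsF U, hfun m) * ∏ i ∈ I', ((B i).card.factorial : ℚ)) := by ring
      _ = (S.card.factorial : ℚ) * (∑ m ∈ permsF (B i0), g i0 m)
            * ((U.card.factorial : ℚ) * ∏ i ∈ I', (∑ m ∈ permsF (B i), g i m)) := by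
          rw [ihU]
      _ = (S.card.factorial : ℚ) * ((∑ m ∈ permsF (B i0), g i0 m)
            * ∏ i ∈ I', (∑ m ∈ permsF (B i), g i m)) * (U.card.factorial : ℚ) := by ring


lemma ne_of_E {G : DiGraph} (hG : G.IsOTree) {i j : ℕ} (h : G.E i j) : i ≠ j :=
  fun he => hG.2.1 i j h (he ▸ h)

lemma verts_nonempty {G : DiGraph} (hG : G.IsOTree) : G.verts.Nonempty := by
  obtain ⟨x⟩ := hG.2.2.isConnected.nonempty
  exact ⟨x.1, x.2⟩

lemma acyclic_transfer {V W : Type} {A : SimpleGraph V} {B : SimpleGraph W} (f : A →g B)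
    (hf : Function.Injective f) (hB : B.IsAcyclic) : A.IsAcyclic := by
  intro v p hp
  exact hB (p.map f) ((SimpleGraph.Walk.map_isCycle_iff_of_injective hf).mpr hp)

/-- Homomorphism from the delV graph to the original. -/
def delVHom (G : DiGraph) (v : ℕ) : (G.delV v).symGraph →g G.symGraph where
  toFun := fun x => ⟨x.1, Finset.mem_of_mem_erase x.2⟩
  map_rel' := by
    rintro a b (⟨h1, h2⟩ : (_ ∨ _) ∧ _)
    show (_ ∨ _) ∧ _
    refine ⟨?_, fun he => h2 ?_⟩
    · rcases h1 with ⟨h, _, _⟩ | ⟨h, _, _⟩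
      · exact Or.inl h
      · exact Or.inr h
    · injection he with h3
      exact Subtype.ext h3

lemma delV_acyclic {G : DiGraph} (hG : G.IsOTree) (v : ℕ) :
    (G.delV v).symGraph.IsAcyclic := by
  apply acyclic_transfer (delVHom G v) ?_ hG.2.2.IsAcyclic
  intro a b hab
  injection hab with h3
  exact Subtype.ext h3

/-- Homomorphism from a component graph to the ambient graph. -/
def compHom (H : DiGraph) (c : H.symGraph.ConnectedComponent) :
    (H.component c).symGraph →g H.symGraph where
  toFun := fun x => ⟨x.1, Finset.mem_of_mem_filter _ x.2⟩
  map_rel' := by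
    rintro a b (⟨h1, h2⟩ : (_ ∨ _) ∧ _)
    show (_ ∨ _) ∧ _
    refine ⟨?_, fun he => h2 ?_⟩
    · rcases h1 with ⟨h, _, _⟩ | ⟨h, _, _⟩
      · exact Or.inl h
      · exact Or.inr h
    · injection he with h3
      exact Subtype.ext h3

lemma mem_compVerts {H : DiGraph} {c : H.symGraph.ConnectedComponent} {x : ℕ} :
    x ∈ H.compVerts c ↔ ∃ h : x ∈ H.verts, H.symGraph.connectedComponentMk ⟨x, h⟩ = c := by
  constructor
  · intro h; exact (Finset.mem_filter.mp h).2
  · intro h; exact Finset.mem_filter.mpr ⟨h.choose, h⟩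

lemma compVerts_disjoint {H : DiGraph} {c c' : H.symGraph.ConnectedComponent} (h : c ≠ c')
    {x : ℕ} (hx : x ∈ H.compVerts c) : x ∉ H.compVerts c' := by
  intro hx'
  obtain ⟨h1, e1⟩ := mem_compVerts.mp hx
  obtain ⟨h2, e2⟩ := mem_compVerts.mp hx'
  exact h (e1 ▸ e2 ▸ rfl)

lemma verts_eq_biUnion (H : DiGraph) [Fintype H.symGraph.ConnectedComponent] :
    H.verts = Finset.univ.biUnion (fun c => H.compVerts c) := by
  ext x
  simp only [Finset.mem_biUnion, Finset.mem_univ, true_and]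
  constructor
  · intro hx
    exact ⟨H.symGraph.connectedComponentMk ⟨x, hx⟩, mem_compVerts.mpr ⟨hx, rfl⟩⟩
  · rintro ⟨c, hc⟩
    exact (Finset.mem_filter.mp hc).1

/-- Reachability transfers into the component graph. -/
lemma reach_in_comp (H : DiGraph) (c : H.symGraph.ConnectedComponent) :
    ∀ {x y : {z : ℕ // z ∈ H.verts}} (_ : H.symGraph.Walk x y)
      (hx : x.1 ∈ H.compVerts c) (hy : y.1 ∈ H.compVerts c),
      (H.component c).symGraph.Reachable ⟨x.1, hx⟩ ⟨y.1, hy⟩ := by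
  intro x y p
  induction p with
  | nil =>
    intro hx hy
    exact Reachable.refl _
  | @cons a b y hadj p ih =>
    intro hx hy
    have hbv : b.1 ∈ H.verts := b.2
    have hbc : b.1 ∈ H.compVerts c := by
      apply mem_compVerts.mpr
      refine ⟨hbv, ?_⟩
      obtain ⟨ha, hac⟩ := mem_compVerts.mp hx
      have h1 : H.symGraph.connectedComponentMk a = c := by
        convert hac using 2
      have h2 : H.symGraph.connectedComponentMk b =
          H.symGraph.connectedComponentMk a :=
        (SimpleGraph.ConnectedComponent.sound hadj.reachable).symm
      rw [show (⟨b.1, hbv⟩ : {z : ℕ // z ∈ H.verts}) = b from Subtype.ext rfl, h2, h1]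
    have hstep : (H.component c).symGraph.Adj ⟨a.1, hx⟩ ⟨b.1, hbc⟩ := by
      obtain ⟨ho, hne⟩ := (hadj : (_ ∨ _) ∧ _)
      show (_ ∨ _) ∧ _
      constructor
      · rcases ho with h | h
        · exact Or.inl ⟨h, hx, hbc⟩
        · exact Or.inr ⟨h, hbc, hx⟩
      · intro he
        injection he with h3
        exact hne (Subtype.ext h3)
    exact (hstep.reachable).trans (ih hbc hy)

lemma component_isOTree {G : DiGraph} (hG : G.IsOTree) (v : ℕ)
    (c : (G.delV v).symGraph.ConnectedComponent) :
    ((G.delV v).component c).IsOTree := by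
  refine ⟨?_, ?_, ?_, ?_⟩
  · rintro i j ⟨_, hi, hj⟩
    exact ⟨hi, hj⟩
  · rintro i j ⟨⟨hij, _⟩, _, _⟩ ⟨⟨hji, _⟩, _, _⟩
    exact hG.2.1 i j hij hji
  · -- connected
    obtain ⟨w, hw⟩ := c.exists_rep
    haveI hnonempty : Nonempty {z : ℕ // z ∈ ((G.delV v).component c).verts} :=
      ⟨⟨w.1, mem_compVerts.mpr ⟨w.2, by rwa [show (⟨w.1, w.2⟩ : {z : ℕ // z ∈ (G.delV v).verts}) = w from Subtype.ext rfl]⟩⟩⟩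
    constructor
    intro a b
    obtain ⟨ha1, hac⟩ := mem_compVerts.mp a.2
    obtain ⟨hb1, hbc⟩ := mem_compVerts.mp b.2
    have hreach : (G.delV v).symGraph.Reachable ⟨a.1, ha1⟩ ⟨b.1, hb1⟩ :=
      SimpleGraph.ConnectedComponent.exact (hac.trans hbc.symm)
    obtain ⟨p⟩ := hreach
    have := reach_in_comp (G.delV v) c p a.2 b.2
    convert this using 2 <;> exact Subtype.ext rfl
  · -- acyclic
    apply acyclic_transfer (compHom (G.delV v) c) ?_ (delV_acyclic hG v)
    intro a b hab
    injection hab with h3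
    exact Subtype.ext h3



/-- The set of oriented edges of `G`, as ordered pairs. -/
noncomputable def eF (G : DiGraph) : Finset (ℕ × ℕ) :=
  (G.verts ×ˢ G.verts).filter fun p => G.E p.1 p.2

lemma mem_eF {G : DiGraph} {p : ℕ × ℕ} :
    p ∈ eF G ↔ p.1 ∈ G.verts ∧ p.2 ∈ G.verts ∧ G.E p.1 p.2 := by
  simp [eF, and_assoc]

/-- The sign weight of an ordering. -/
noncomputable def W (G : DiGraph) (l : List ℕ) : ℚ :=
  ∏ p ∈ eF G, (if bef l p.1 p.2 then 1 else -1)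

/-- Explicit formula for the tree coefficients. -/
noncomputable def f (G : DiGraph) : ℚ :=
  ((G.verts.card.factorial : ℚ))⁻¹ * ∑ l ∈ permsF G.verts, W G l

lemma card_eF {G : DiGraph} (hG : G.IsOTree) : (eF G).card + 1 = G.verts.card := by
  classical
  haveI : Fintype G.symGraph.edgeSet := Fintype.ofFinite _
  have hcard := hG.2.2.card_edgeFinset
  rw [Fintype.card_coe] at hcard
  rw [← hcard]
  congr 1
  apply Finset.card_bij (s := eF G) (t := G.symGraph.edgeFinset) (fun p hp => s(⟨p.1, (mem_eF.mp hp).1⟩, ⟨p.2, (mem_eF.mp hp).2.1⟩))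
  · intro p hp
    rw [SimpleGraph.mem_edgeFinset, SimpleGraph.mem_edgeSet]
    obtain ⟨h1, h2, h3⟩ := mem_eF.mp hp
    show (_ ∨ _) ∧ _
    exact ⟨Or.inl h3, fun he => ne_of_E hG h3 (congrArg Subtype.val he)⟩
  · intro p hp q hq he
    obtain ⟨_, _, h3⟩ := mem_eF.mp hp
    obtain ⟨_, _, h3'⟩ := mem_eF.mp hq
    rw [Sym2.eq_iff] at he
    rcases he with ⟨ha, hb⟩ | ⟨ha, hb⟩
    · have e1 : p.1 = q.1 := congrArg Subtype.val ha
      have e2 : p.2 = q.2 := congrArg Subtype.val hb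
      exact Prod.ext e1 e2
    · have e1 : p.1 = q.2 := congrArg Subtype.val ha
      have e2 : p.2 = q.1 := congrArg Subtype.val hb
      exfalso
      exact hG.2.1 _ _ h3 (by rw [e1, e2] at h3 ⊢; exact h3')
  · intro e he
    induction e with
    | _ a b =>
      rw [SimpleGraph.mem_edgeFinset, SimpleGraph.mem_edgeSet] at he
      obtain ⟨ho, hne⟩ := (he : (_ ∨ _) ∧ _)
      rcases ho with h | h
      · refine ⟨(a.1, b.1), mem_eF.mpr ⟨a.2, b.2, h⟩, ?_⟩
        simp only [Subtype.coe_eta]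
      · refine ⟨(b.1, a.1), mem_eF.mpr ⟨b.2, a.2, h⟩, ?_⟩
        simp only [Subtype.coe_eta]
        exact Sym2.eq_swap

lemma card_in_edges {G : DiGraph} (hG : G.IsOTree) (v : ℕ) :
    ((eF G).filter fun p => p.2 = v).card = G.inDeg v := by
  apply Finset.card_bij (fun p _ => p.1)
  · intro p hp
    obtain ⟨hp1, hp2⟩ := Finset.mem_filter.mp hp
    obtain ⟨h1, _, h3⟩ := mem_eF.mp hp1
    exact Finset.mem_filter.mpr ⟨h1, hp2 ▸ h3⟩
  · intro p hp q hq he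
    obtain ⟨_, hp2⟩ := Finset.mem_filter.mp hp
    obtain ⟨_, hq2⟩ := Finset.mem_filter.mp hq
    exact Prod.ext he (hp2.trans hq2.symm)
  · intro w hw
    obtain ⟨h1, h2⟩ := Finset.mem_filter.mp hw
    refine ⟨(w, v), Finset.mem_filter.mpr ⟨mem_eF.mpr ⟨h1, (hG.1 _ _ h2).2, h2⟩, rfl⟩, rfl⟩

lemma eF_delV {G : DiGraph} (v : ℕ) :
    eF (G.delV v) = ((eF G).filter fun p => ¬ p.2 = v).filter fun p => ¬ p.1 = v := by
  ext p
  simp only [Finset.mem_filter, mem_eF, delV, Finset.mem_erase]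
  constructor
  · rintro ⟨⟨h1v, h1⟩, ⟨h2v, h2⟩, h3, _, _⟩
    exact ⟨⟨⟨h1, h2, h3⟩, h2v⟩, h1v⟩
  · rintro ⟨⟨⟨h1, h2, h3⟩, h2v⟩, h1v⟩
    exact ⟨⟨h1v, h1⟩, ⟨h2v, h2⟩, h3, h1v, h2v⟩

lemma W_cons {G : DiGraph} (hG : G.IsOTree) {v : ℕ} (hv : v ∈ G.verts) {l' : List ℕ}
    (hvl' : v ∉ l') (htf : l'.toFinset = G.verts.erase v) :
    W G (v :: l') = (-1 : ℚ) ^ (G.inDeg v) * W (G.delV v) l' := by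
  rw [W, ← Finset.prod_filter_mul_prod_filter_not (eF G) (fun p => p.2 = v),
    ← Finset.prod_filter_mul_prod_filter_not ((eF G).filter fun p => ¬ p.2 = v)
      (fun p => p.1 = v)]
  have hin : ∀ p ∈ (eF G).filter (fun p => p.2 = v),
      (if bef (v :: l') p.1 p.2 then (1 : ℚ) else -1) = -1 := by
    intro p hp
    obtain ⟨hp1, hp2⟩ := Finset.mem_filter.mp hp
    have hne : p.1 ≠ v := by
      intro h
      exact ne_of_E hG (mem_eF.mp hp1).2.2 (h.trans hp2.symm)
    rw [if_neg]
    rw [hp2]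
    exact not_bef_cons_right hvl' hne
  have hout : ∀ p ∈ ((eF G).filter fun p => ¬ p.2 = v).filter (fun p => p.1 = v),
      (if bef (v :: l') p.1 p.2 then (1 : ℚ) else -1) = 1 := by
    intro p hp
    obtain ⟨hp', hp1⟩ := Finset.mem_filter.mp hp
    obtain ⟨hpe, hp2⟩ := Finset.mem_filter.mp hp'
    have hmem : p.2 ∈ l' := by
      rw [← List.mem_toFinset, htf]
      exact Finset.mem_erase.mpr ⟨hp2, (mem_eF.mp hpe).2.1⟩
    rw [if_pos]
    rw [hp1]
    exact bef_cons_self hmem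
  have hrest : ∀ p ∈ ((eF G).filter fun p => ¬ p.2 = v).filter (fun p => ¬ p.1 = v),
      (if bef (v :: l') p.1 p.2 then (1 : ℚ) else -1)
        = (if bef l' p.1 p.2 then (1 : ℚ) else -1) := by
    intro p hp
    obtain ⟨_, hp1⟩ := Finset.mem_filter.mp hp
    rw [bef_cons_of_ne hp1]
  rw [Finset.prod_congr rfl hin, Finset.prod_congr rfl hout,
    Finset.prod_congr rfl hrest, Finset.prod_const, Finset.prod_const,
    card_in_edges hG v, W, eF_delV]
  ring

lemma edge_same_comp {H : DiGraph} (hnl : ∀ i j, H.E i j → i ≠ j)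
    {c : H.symGraph.ConnectedComponent} {i j : ℕ} (hE : H.E i j)
    (hiv : i ∈ H.verts) (hjv : j ∈ H.verts) (hi : i ∈ H.compVerts c) :
    j ∈ H.compVerts c := by
  obtain ⟨h1, hc⟩ := mem_compVerts.mp hi
  apply mem_compVerts.mpr
  refine ⟨hjv, ?_⟩
  have hadj : H.symGraph.Adj ⟨i, hiv⟩ ⟨j, hjv⟩ :=
    (⟨Or.inl hE, fun he => hnl i j hE (congrArg Subtype.val he)⟩ : (_ ∨ _) ∧ _)
  have h2 := (SimpleGraph.ConnectedComponent.sound hadj.reachable).symm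
  rw [h2]
  exact hc

lemma eF_component {H : DiGraph} (hnl : ∀ i j, H.E i j → i ≠ j)
    (c : H.symGraph.ConnectedComponent) :
    eF (H.component c) = (eF H).filter fun p => p.1 ∈ H.compVerts c := by
  ext p
  simp only [Finset.mem_filter, mem_eF, DiGraph.component, DiGraph.induce]
  constructor
  · rintro ⟨h1, h2, h3, h4, h5⟩
    exact ⟨⟨(Finset.mem_filter.mp h1).1, (Finset.mem_filter.mp h2).1, h3⟩, h4⟩
  · rintro ⟨⟨h1, h2, h3⟩, h4⟩
    have h5 := edge_same_comp hnl h3 h1 h2 h4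
    exact ⟨h4, h5, h3, h4, h5⟩

lemma W_comp (H : DiGraph) [Fintype H.symGraph.ConnectedComponent]
    (hnl : ∀ i j, H.E i j → i ≠ j)
    {l : List ℕ} (hnd : l.Nodup) (htf : l.toFinset = H.verts) :
    W H l = ∏ c : H.symGraph.ConnectedComponent,
      W (H.component c) (l.filter fun x => decide (x ∈ H.compVerts c)) := by
  have hbi : eF H = Finset.univ.biUnion
      (fun c => (eF H).filter fun p => p.1 ∈ H.compVerts c) := by
    ext p
    simp only [Finset.mem_biUnion, Finset.mem_univ, true_and, Finset.mem_filter]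
    constructor
    · intro hp
      obtain ⟨h1, h2, h3⟩ := mem_eF.mp hp
      exact ⟨H.symGraph.connectedComponentMk ⟨p.1, h1⟩, hp, mem_compVerts.mpr ⟨h1, rfl⟩⟩
    · rintro ⟨c, hp, _⟩; exact hp
  rw [W, hbi, Finset.prod_biUnion]
  · apply Finset.prod_congr rfl
    intro c _
    rw [W, eF_component hnl c]
    apply Finset.prod_congr rfl
    intro p hp
    obtain ⟨hpe, hp1⟩ := Finset.mem_filter.mp hp
    obtain ⟨h1, h2, h3⟩ := mem_eF.mp hpe
    have hp2 : p.2 ∈ H.compVerts c := edge_same_comp hnl h3 h1 h2 hp1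
    have hx : p.1 ∈ l.filter (fun x => decide (x ∈ H.compVerts c)) :=
      List.mem_filter.mpr ⟨by rw [← List.mem_toFinset, htf]; exact h1, by simpa using hp1⟩
    have hy : p.2 ∈ l.filter (fun x => decide (x ∈ H.compVerts c)) :=
      List.mem_filter.mpr ⟨by rw [← List.mem_toFinset, htf]; exact h2, by simpa using hp2⟩
    rw [bef_filter_iff hnd _ hx hy (hnl _ _ h3)]
  · intro c _ c' _ hcc'
    apply Finset.disjoint_left.mpr
    intro p hp hp'
    exact compVerts_disjoint hcc' (Finset.mem_filter.mp hp).2 (Finset.mem_filter.mp hp').2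

lemma f_card_one {G : DiGraph} (hG : G.IsOTree) (h1 : G.verts.card = 1) : f G = 1 := by
  have heF : eF G = ∅ := by
    rw [Finset.eq_empty_iff_forall_notMem]
    intro p hp
    obtain ⟨ha, hb, hE⟩ := mem_eF.mp hp
    obtain ⟨x, hx⟩ := Finset.card_eq_one.mp h1
    rw [hx] at ha hb
    exact ne_of_E hG hE ((Finset.mem_singleton.mp ha).trans (Finset.mem_singleton.mp hb).symm)
  have hWone : ∀ l, W G l = 1 := fun l => by rw [W, heF, Finset.prod_empty]
  have hne : G.verts.Nonempty := verts_nonempty hG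
  have herase : ∀ v ∈ G.verts, G.verts.erase v = ∅ := by
    intro v hv
    have := Finset.card_erase_add_one hv
    rw [h1] at this
    exact Finset.card_eq_zero.mp (by omega)
  simp only [f]
  rw [sum_permsF_cons _ hne,
    Finset.sum_congr rfl (fun v hv => by
      rw [herase v hv, permsF_empty, Finset.sum_singleton, hWone]),
    Finset.sum_const, h1]
  norm_num [Nat.factorial]

lemma f_even {G : DiGraph} (hG : G.IsOTree) (he : Even G.verts.card) : f G = 0 := by
  have hflip : ∀ l ∈ permsF G.verts, W G l.reverse = - W G l := by
    intro l hl
    obtain ⟨hnd, htf⟩ := mem_permsF.mp hl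
    rw [W, W]
    have hterm : ∀ p ∈ eF G, (if bef l.reverse p.1 p.2 then (1:ℚ) else -1)
        = -1 * (if bef l p.1 p.2 then (1:ℚ) else -1) := by
      intro p hp
      obtain ⟨h1, h2, h3⟩ := mem_eF.mp hp
      have hne := ne_of_E hG h3
      have hx : p.1 ∈ l := by rw [← List.mem_toFinset, htf]; exact h1
      have hy : p.2 ∈ l := by rw [← List.mem_toFinset, htf]; exact h2
      by_cases hb : bef l p.1 p.2
      · rw [if_pos hb, if_neg, mul_one]
        intro hrev
        exact bef_asymm hnd hb (bef_reverse_iff.mp hrev)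
      · rw [if_neg hb, if_pos]
        · ring
        · rcases bef_total hx hy hne with h | h
          · exact absurd h hb
          · exact bef_reverse_iff.mpr h
    rw [Finset.prod_congr rfl hterm, Finset.prod_mul_distrib, Finset.prod_const]
    have hodd : Odd (eF G).card := by
      have hc := card_eF hG
      obtain ⟨k, hk⟩ := he
      have h1 : 1 ≤ G.verts.card := Finset.card_pos.mpr (verts_nonempty hG)
      exact ⟨k - 1, by omega⟩
    rw [hodd.neg_one_pow]
    ring
  have h2 : ∑ l ∈ permsF G.verts, W G l = ∑ l ∈ permsF G.verts, W G l.reverse := by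
    apply Finset.sum_nbij' (i := fun (l : List ℕ) => l.reverse)
      (j := fun (l : List ℕ) => l.reverse)
    · intro l hl
      obtain ⟨hnd, htf⟩ := mem_permsF.mp hl
      exact mem_permsF.mpr ⟨by simpa using hnd, by simpa using htf⟩
    · intro l hl
      obtain ⟨hnd, htf⟩ := mem_permsF.mp hl
      exact mem_permsF.mpr ⟨by simpa using hnd, by simpa using htf⟩
    · intro l _; simp
    · intro l _; simp
    · intro l _; simp
  have h3 : ∑ l ∈ permsF G.verts, W G l = 0 := by
    have h4 := h2.trans (Finset.sum_congr rfl hflip)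
    rw [Finset.sum_neg_distrib] at h4
    linarith
  simp only [f, h3, mul_zero]

lemma f_rec {G : DiGraph} (hG : G.IsOTree) (h2 : 2 ≤ G.verts.card) :
    f G = (1 / (G.verts.card : ℚ)) * ∑ v ∈ G.verts, (-1 : ℚ) ^ (G.inDeg v) *
      ∏ᶠ c : (G.delV v).symGraph.ConnectedComponent, f ((G.delV v).component c) := by
  have hne : G.verts.Nonempty := verts_nonempty hG
  have key : ∀ v ∈ G.verts,
      (∑ l' ∈ permsF (G.verts.erase v), W G (v :: l'))
        = (-1 : ℚ) ^ (G.inDeg v) * (((G.verts.card - 1).factorial : ℚ)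
          * ∏ᶠ c : (G.delV v).symGraph.ConnectedComponent, f ((G.delV v).component c)) := by
    intro v hv
    haveI : Fintype (G.delV v).symGraph.ConnectedComponent := Fintype.ofFinite _
    have hnl : ∀ i j, (G.delV v).E i j → i ≠ j := fun i j h => ne_of_E hG h.1
    have step1 : ∀ l' ∈ permsF (G.verts.erase v), W G (v :: l')
        = (-1:ℚ)^(G.inDeg v) * ∏ c : (G.delV v).symGraph.ConnectedComponent,
            W ((G.delV v).component c)
              (l'.filter fun x => decide (x ∈ (G.delV v).compVerts c)) := by
      intro l' hl'
      obtain ⟨hnd, htf⟩ := mem_permsF.mp hl'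
      have hvl' : v ∉ l' := fun h => by
        have := htf ▸ List.mem_toFinset.mpr h
        simp at this
      rw [W_cons hG hv hvl' htf, W_comp (G.delV v) hnl hnd htf]
    rw [Finset.sum_congr rfl step1, ← Finset.mul_sum]
    congr 1
    have hbiU : (G.verts.erase v) = (Finset.univ :
        Finset (G.delV v).symGraph.ConnectedComponent).biUnion
        (fun c => (G.delV v).compVerts c) := verts_eq_biUnion (G.delV v)
    have hdisj : ∀ c ∈ (Finset.univ :
        Finset (G.delV v).symGraph.ConnectedComponent), ∀ c' ∈ Finset.univ, c ≠ c' → ∀ x,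
        x ∈ (G.delV v).compVerts c → x ∉ (G.delV v).compVerts c' :=
      fun c _ c' _ hcc' x hx => compVerts_disjoint hcc' hx
    have hM := shuffleM Finset.univ (fun c => (G.delV v).compVerts c)
      (fun c m => W ((G.delV v).component c) m) hdisj
    rw [← hbiU] at hM
    have hcomp : ∀ c : (G.delV v).symGraph.ConnectedComponent,
        (∑ m ∈ permsF ((G.delV v).compVerts c), W ((G.delV v).component c) m)
        = (((G.delV v).compVerts c).card.factorial : ℚ) * f ((G.delV v).component c) := by
      intro c
      have hv' : ((G.delV v).component c).verts = (G.delV v).compVerts c := rfl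
      rw [f, hv']
      rw [← mul_assoc, mul_inv_cancel₀ (by exact_mod_cast Nat.factorial_ne_zero _), one_mul]
    rw [Finset.prod_congr rfl (fun c _ => hcomp c)] at hM
    have hA : (∏ c : (G.delV v).symGraph.ConnectedComponent,
        (((G.delV v).compVerts c).card.factorial : ℚ)) ≠ 0 := by
      apply Finset.prod_ne_zero_iff.mpr
      intro c _
      exact_mod_cast Nat.factorial_ne_zero _
    have hprodsplit : (∏ c : (G.delV v).symGraph.ConnectedComponent,
          ((((G.delV v).compVerts c).card.factorial : ℚ) * f ((G.delV v).component c)))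
        = (∏ c : (G.delV v).symGraph.ConnectedComponent,
            (((G.delV v).compVerts c).card.factorial : ℚ))
          * ∏ c : (G.delV v).symGraph.ConnectedComponent, f ((G.delV v).component c) :=
      Finset.prod_mul_distrib
    rw [hprodsplit] at hM
    have hcard : (G.verts.erase v).card = G.verts.card - 1 := Finset.card_erase_of_mem hv
    rw [finprod_eq_prod_of_fintype]
    apply mul_right_cancel₀ hA
    rw [hM, hcard]
    ring
  rw [f]
  rw [sum_permsF_cons _ hne, Finset.sum_congr rfl key]
  have hstep : ∑ v ∈ G.verts, (-1 : ℚ) ^ (G.inDeg v) * (((G.verts.card - 1).factorial : ℚ)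
        * ∏ᶠ c : (G.delV v).symGraph.ConnectedComponent, f ((G.delV v).component c))
      = ((G.verts.card - 1).factorial : ℚ) * ∑ v ∈ G.verts, (-1 : ℚ) ^ (G.inDeg v) *
        ∏ᶠ c : (G.delV v).symGraph.ConnectedComponent, f ((G.delV v).component c) := by
    rw [Finset.mul_sum]
    apply Finset.sum_congr rfl
    intro v _
    ring
  rw [hstep]
  have hfac : (G.verts.card.factorial : ℚ)
      = (G.verts.card : ℚ) * ((G.verts.card - 1).factorial : ℚ) := by
    have := Nat.mul_factorial_pred (n := G.verts.card) (by omega)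
    exact_mod_cast this.symm
  rw [hfac]
  have hn0 : (G.verts.card : ℚ) ≠ 0 := by
    have : 0 < G.verts.card := by omega
    exact_mod_cast this.ne'
  have hf0 : (((G.verts.card - 1).factorial : ℕ) : ℚ) ≠ 0 := by
    exact_mod_cast Nat.factorial_ne_zero _
  field_simp

end ATaux

/-- The tree coefficients `a_T` defined recursively by
`a_T = (1/n_T) Σ_{v ∈ V_T} (−1)^{n_v⁺} ∏_{s=1}^{n_v} a_{T_s(v)}`, with `a_• = 1` for the
one-vertex tree, vanish for every oriented unrooted labelled tree with an even number of
vertices. -/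
theorem aT_vanishes_for_even_trees (a : DiGraph → ℚ) (ha : DiGraph.ARec a) :
    ∀ G : DiGraph, G.IsOTree → Even G.verts.card → a G = 0 := by
  have key : ∀ n : ℕ, ∀ G : DiGraph, G.IsOTree → G.verts.card ≤ n → a G = ATaux.f G := by
    intro n
    induction n with
    | zero =>
      intro G hG hle
      have h1 : 1 ≤ G.verts.card := Finset.card_pos.mpr (ATaux.verts_nonempty hG)
      omega
    | succ n ih =>
      intro G hG hle
      have h1 : 1 ≤ G.verts.card := Finset.card_pos.mpr (ATaux.verts_nonempty hG)
      rcases eq_or_lt_of_le h1 with heq | hlt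
      · rw [ha.1 G hG heq.symm, ATaux.f_card_one hG heq.symm]
      · have h2 : 2 ≤ G.verts.card := hlt
        rw [ha.2 G hG h2, ATaux.f_rec hG h2]
        congr 1
        apply Finset.sum_congr rfl
        intro v hv
        congr 1
        apply finprod_congr
        intro c
        apply ih
        · exact ATaux.component_isOTree hG v c
        · have hveq : ((G.delV v).component c).verts = (G.delV v).compVerts c := rfl
          rw [hveq]
          have hsub : (G.delV v).compVerts c ⊆ (G.delV v).verts := Finset.filter_subset _ _
          have hcle := Finset.card_le_card hsub
          have herase : (G.delV v).verts = G.verts.erase v := rfl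
          rw [herase] at hcle
          have hec := Finset.card_erase_of_mem hv
          omega
  intro G hG heven
  rw [key G.verts.card G hG le_rfl]
  exact ATaux.f_even hG heven
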